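/- Let k ≥ 1, let S : ℝ^p → ℝ^s be a linear map, let U ∈ ℝ^{p×k} have columns U¹, …, U^k each of Euclidean norm at most 1, let v ∈ ℝ^p with ‖v‖₂ ≤ 1, and let 0 ≤ ε ≤ 1. If for every i ∈ {1,…,k} the map S is an (ε/(3√k))-isometry on the subspace span{Uⁱ, v}, then | ‖(S U)ᵀ (S v)‖₂ − ‖Uᵀ v‖₂ | ≤ ε, where S U denotes the matrix whose i-th column is S(Uⁱ). -/

import Mathlib

open scoped RealInnerProductSpace

lemma sq_sketch_close (δ a a' : ℝ) (hδ0 : 0 ≤ δ) (hδ1 : δ ≤ 1) (ha : 0 ≤ a) (ha' : 0 ≤ a')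
    (h1 : (1-δ)*a ≤ a') (h2 : a' ≤ (1+δ)*a) : |a'^2 - a^2| ≤ 3*δ*a^2 := by
  
  rw [abs_le]
  constructor <;> nlinarith [mul_le_mul h2 h2 ha' (by nlinarith : (0:ℝ) ≤ (1+δ)*a),
    mul_le_mul h1 h1 (by nlinarith : (0:ℝ) ≤ (1-δ)*a) ha', sq_nonneg a,
    mul_nonneg hδ0 (sq_nonneg a)]

lemma inner_sketch_close {E F : Type*} [NormedAddCommGroup E] [InnerProductSpace ℝ E]
    [NormedAddCommGroup F] [InnerProductSpace ℝ F]
    (S : E →ₗ[ℝ] F) (u v : E) (δ : ℝ) (hδ0 : 0 ≤ δ) (hδ1 : δ ≤ 1)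
    (hu : ‖u‖ ≤ 1) (hv : ‖v‖ ≤ 1)
    (h1 : (1-δ)*‖u+v‖ ≤ ‖S (u+v)‖) (h2 : ‖S (u+v)‖ ≤ (1+δ)*‖u+v‖)
    (h3 : (1-δ)*‖u-v‖ ≤ ‖S (u-v)‖) (h4 : ‖S (u-v)‖ ≤ (1+δ)*‖u-v‖) :
    |⟪S u, S v⟫ - ⟪u, v⟫| ≤ 3*δ := by
  have e1 : ‖u+v‖^2 = ‖u‖^2 + 2*⟪u,v⟫ + ‖v‖^2 := by rw [← norm_add_sq_real]
  have e2 : ‖u-v‖^2 = ‖u‖^2 - 2*⟪u,v⟫ + ‖v‖^2 := by rw [← norm_sub_sq_real]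
  have f1 : ‖S u + S v‖^2 = ‖S u‖^2 + 2*⟪S u, S v⟫ + ‖S v‖^2 := by rw [← norm_add_sq_real]
  have f2 : ‖S u - S v‖^2 = ‖S u‖^2 - 2*⟪S u, S v⟫ + ‖S v‖^2 := by rw [← norm_sub_sq_real]
  rw [map_add S u v] at h1 h2; rw [map_sub S u v] at h3 h4
  have hb1 := sq_sketch_close δ ‖u+v‖ ‖S u + S v‖ hδ0 hδ1 (norm_nonneg _) (norm_nonneg _) h1 h2
  have hb2 := sq_sketch_close δ ‖u-v‖ ‖S u - S v‖ hδ0 hδ1 (norm_nonneg _) (norm_nonneg _) h3 h4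
  have hpar : ‖u+v‖^2 + ‖u-v‖^2 ≤ 4 := by nlinarith [norm_nonneg u, norm_nonneg v]
  rw [abs_le] at hb1 hb2 ⊢
  constructor <;> nlinarith [mul_nonneg hδ0 (sq_nonneg ‖u+v‖), mul_nonneg hδ0 (sq_nonneg ‖u-v‖)]

theorem sketched_matvec_norm_close
    {p s k : ℕ} (hk : 1 ≤ k)
    (S : EuclideanSpace ℝ (Fin p) →ₗ[ℝ] EuclideanSpace ℝ (Fin s))
    (U : Fin k → EuclideanSpace ℝ (Fin p)) (hU : ∀ i, ‖U i‖ ≤ 1)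
    (v : EuclideanSpace ℝ (Fin p)) (hv : ‖v‖ ≤ 1)
    (ε : ℝ) (hε0 : 0 ≤ ε) (hε1 : ε ≤ 1)
    (hS : ∀ i : Fin k, ∀ w ∈ Submodule.span ℝ ({U i, v} : Set (EuclideanSpace ℝ (Fin p))),
      (1 - ε / (3 * Real.sqrt k)) * ‖w‖ ≤ ‖S w‖ ∧
        ‖S w‖ ≤ (1 + ε / (3 * Real.sqrt k)) * ‖w‖) :
    abs (‖(EuclideanSpace.equiv (Fin k) ℝ).symm (fun i => ⟪S (U i), S v⟫)‖
        - ‖(EuclideanSpace.equiv (Fin k) ℝ).symm (fun i => ⟪U i, v⟫)‖) ≤ ε := by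
  have hk1 : (1:ℝ) ≤ (k:ℝ) := by exact_mod_cast hk
  have hsk : (1:ℝ) ≤ Real.sqrt k := by
    rw [show (1:ℝ) = Real.sqrt 1 by simp]
    exact Real.sqrt_le_sqrt hk1
  have hsk0 : (0:ℝ) < Real.sqrt k := by linarith
  set δ : ℝ := ε / (3 * Real.sqrt k) with hδ
  have hδ0 : 0 ≤ δ := div_nonneg hε0 (by positivity)
  have hδ1 : δ ≤ 1 := by
    rw [div_le_one (by positivity)]; nlinarith
  -- per-coordinate bound
  have hcoord : ∀ i : Fin k, |⟪S (U i), S v⟫ - ⟪U i, v⟫| ≤ ε / Real.sqrt k := by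
    intro i
    have hmemU : U i ∈ Submodule.span ℝ ({U i, v} : Set (EuclideanSpace ℝ (Fin p))) :=
      Submodule.subset_span (Set.mem_insert _ _)
    have hmemv : v ∈ Submodule.span ℝ ({U i, v} : Set (EuclideanSpace ℝ (Fin p))) :=
      Submodule.subset_span (Set.mem_insert_of_mem _ rfl)
    have hsum := hS i (U i + v) (Submodule.add_mem _ hmemU hmemv)
    have hdiff := hS i (U i - v) (Submodule.sub_mem _ hmemU hmemv)
    have := inner_sketch_close S (U i) v δ hδ0 hδ1 (hU i) hv hsum.1 hsum.2 hdiff.1 hdiff.2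
    calc |⟪S (U i), S v⟫ - ⟪U i, v⟫| ≤ 3 * δ := this
      _ = ε / Real.sqrt k := by rw [hδ]; field_simp
  -- combine
  rw [← Real.norm_eq_abs]
  have key : ‖(EuclideanSpace.equiv (Fin k) ℝ).symm (fun i => ⟪S (U i), S v⟫)
      - (EuclideanSpace.equiv (Fin k) ℝ).symm (fun i => ⟪U i, v⟫)‖ ≤ ε := by
    rw [EuclideanSpace.norm_eq]
    have hb : ∑ i : Fin k, ‖((EuclideanSpace.equiv (Fin k) ℝ).symm (fun i => ⟪S (U i), S v⟫)
        - (EuclideanSpace.equiv (Fin k) ℝ).symm (fun i => ⟪U i, v⟫)) i‖ ^ 2 ≤ ε ^ 2 := by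
      have : ∀ i : Fin k, ‖((EuclideanSpace.equiv (Fin k) ℝ).symm (fun i => ⟪S (U i), S v⟫)
          - (EuclideanSpace.equiv (Fin k) ℝ).symm (fun i => ⟪U i, v⟫)) i‖ ^ 2
          ≤ (ε / Real.sqrt k) ^ 2 := by
        intro i
        have hci : ‖((EuclideanSpace.equiv (Fin k) ℝ).symm (fun i => ⟪S (U i), S v⟫)
            - (EuclideanSpace.equiv (Fin k) ℝ).symm (fun i => ⟪U i, v⟫)) i‖
            = |⟪S (U i), S v⟫ - ⟪U i, v⟫| := by
          simp [Real.norm_eq_abs]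
        rw [hci]
        exact pow_le_pow_left₀ (abs_nonneg _) (hcoord i) 2
      calc ∑ i : Fin k, ‖((EuclideanSpace.equiv (Fin k) ℝ).symm (fun i => ⟪S (U i), S v⟫)
            - (EuclideanSpace.equiv (Fin k) ℝ).symm (fun i => ⟪U i, v⟫)) i‖ ^ 2
          ≤ ∑ _i : Fin k, (ε / Real.sqrt k) ^ 2 := Finset.sum_le_sum (fun i _ => this i)
        _ = k * (ε / Real.sqrt k) ^ 2 := by simp [mul_comm]
        _ = ε ^ 2 := by
            rw [div_pow, Real.sq_sqrt (by positivity)]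
            field_simp
    calc Real.sqrt (∑ i : Fin k, ‖((EuclideanSpace.equiv (Fin k) ℝ).symm (fun i => ⟪S (U i), S v⟫)
          - (EuclideanSpace.equiv (Fin k) ℝ).symm (fun i => ⟪U i, v⟫)) i‖ ^ 2)
        ≤ Real.sqrt (ε ^ 2) := Real.sqrt_le_sqrt hb
      _ = ε := Real.sqrt_sq hε0
  exact le_trans (abs_norm_sub_norm_le _ _) key
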